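/- Let m ∈ ℕ (m ≥ 1). Then for every x ≥ 1, Φ(x) < 1/(2(1 + (x−1)^{2m})^{(2m+1)/(2m)}). -/

import Mathlib

open scoped BigOperators
open Real Filter

/-- The algebraic sigmoid function `φ(x) = x / (1 + x^(2m))^(1/(2m))`. -/
noncomputable def phi (m : ℕ) (x : ℝ) : ℝ :=
  x / (1 + x ^ (2 * m)) ^ ((1 : ℝ) / (2 * m))

/-- The activation function `Φ(x) = (φ(x+1) - φ(x-1))/4`. -/
noncomputable def Phi (m : ℕ) (x : ℝ) : ℝ :=
  (phi m (x + 1) - phi m (x - 1)) / 4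

lemma base_pos (m : ℕ) (x : ℝ) : 0 < 1 + x ^ (2 * m) := by
  have := Even.pow_nonneg (even_two_mul m) x
  linarith

lemma hasDerivAt_phi (m : ℕ) (hm : 1 ≤ m) (x : ℝ) :
    HasDerivAt (phi m) ((1 + x ^ (2 * m)) ^ (-(2 * (m : ℝ) + 1) / (2 * m))) x := by
  have hA : 0 < 1 + x ^ (2 * m) := base_pos m x
  have hm0 : (m : ℝ) ≠ 0 := Nat.cast_ne_zero.mpr (by omega)
  set p : ℝ := (1 : ℝ) / (2 * m) with hp
  have hu : HasDerivAt (fun y : ℝ => 1 + y ^ (2 * m)) ((2 * m : ℝ) * x ^ (2 * m - 1)) x := by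
    simpa using (hasDerivAt_pow (2 * m) x).const_add 1
  have hv : HasDerivAt (fun y : ℝ => (1 + y ^ (2 * m)) ^ p)
      ((2 * m : ℝ) * x ^ (2 * m - 1) * p * (1 + x ^ (2 * m)) ^ (p - 1)) x :=
    hu.rpow_const (Or.inl hA.ne')
  have hd : HasDerivAt (phi m)
      ((1 * (1 + x ^ (2 * m)) ^ p -
        x * ((2 * m : ℝ) * x ^ (2 * m - 1) * p * (1 + x ^ (2 * m)) ^ (p - 1))) /
        ((1 + x ^ (2 * m)) ^ p) ^ 2) x :=
    (hasDerivAt_id x).div hv (by positivity)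
  convert hd using 1
  have hx2m : x * x ^ (2 * m - 1) = x ^ (2 * m) := by
    rw [← pow_succ']
    congr 1
    omega
  have hCp : (2 * (m : ℝ)) * p = 1 := by rw [hp]; field_simp
  have h1 : x * ((2 * m : ℝ) * x ^ (2 * m - 1) * p * (1 + x ^ (2 * m)) ^ (p - 1))
      = x ^ (2 * m) * (1 + x ^ (2 * m)) ^ (p - 1) := by
    calc x * ((2 * m : ℝ) * x ^ (2 * m - 1) * p * (1 + x ^ (2 * m)) ^ (p - 1))
        = (x * x ^ (2 * m - 1)) * ((2 * (m : ℝ)) * p) * (1 + x ^ (2 * m)) ^ (p - 1) := by ring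
      _ = x ^ (2 * m) * (1 + x ^ (2 * m)) ^ (p - 1) := by rw [hx2m, hCp, mul_one]
  have h3 : ((1 + x ^ (2 * m)) ^ p) ^ 2 = (1 + x ^ (2 * m)) ^ (2 * p) := by
    rw [← Real.rpow_natCast ((1 + x ^ (2 * m)) ^ p) 2, ← Real.rpow_mul hA.le]
    norm_num
    ring_nf
  have h2 : (1 + x ^ (2 * m)) ^ p = (1 + x ^ (2 * m)) * (1 + x ^ (2 * m)) ^ (p - 1) := by
    nth_rewrite 1 [show p = 1 + (p - 1) by ring]
    rw [Real.rpow_one_add' hA.le (by simp [hp]; positivity)]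
  rw [one_mul, h1, h3, h2]
  have h4 : (1 + x ^ (2 * m)) * (1 + x ^ (2 * m)) ^ (p - 1)
      - x ^ (2 * m) * (1 + x ^ (2 * m)) ^ (p - 1) = (1 + x ^ (2 * m)) ^ (p - 1) := by ring
  rw [h4, ← Real.rpow_sub hA]
  congr 1
  field_simp [hp]
  linear_combination hCp

theorem Phi_upper_bound (m : ℕ) (hm : 1 ≤ m) :
    ∀ x : ℝ, 1 ≤ x →
      Phi m x < 1 / (2 * (1 + (x - 1) ^ (2 * m)) ^ ((2 * (m : ℝ) + 1) / (2 * m))) := by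
  intro x hx
  have hm0 : (0:ℝ) < m := by exact_mod_cast Nat.pos_of_ne_zero (by omega)
  set e : ℝ := -(2 * (m : ℝ) + 1) / (2 * m) with he
  have hab : x - 1 < x + 1 := by linarith
  obtain ⟨c, hc, hceq⟩ := exists_hasDerivAt_eq_slope (phi m)
      (fun t => (1 + t ^ (2 * m)) ^ e) hab
      (fun t _ => (hasDerivAt_phi m hm t).continuousAt.continuousWithinAt)
      (fun t _ => hasDerivAt_phi m hm t)
  have hxc : x - 1 < c := hc.1
  have hx1 : 0 ≤ x - 1 := by linarith
  have hbase : 1 + (x - 1) ^ (2 * m) < 1 + c ^ (2 * m) := by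
    have := pow_lt_pow_left₀ hxc hx1 (n := 2 * m) (by omega)
    linarith
  have heneg : e < 0 := by
    rw [he]
    apply div_neg_of_neg_of_pos <;> [linarith; positivity]
  have hlt : (1 + c ^ (2 * m)) ^ e < (1 + (x - 1) ^ (2 * m)) ^ e :=
    Real.rpow_lt_rpow_of_neg (base_pos m (x - 1)) hbase heneg
  have hslope : (1 + c ^ (2 * m)) ^ e = (phi m (x + 1) - phi m (x - 1)) / 2 := by
    rw [hceq]; congr 1; ring
  have hrhs : 1 / (2 * (1 + (x - 1) ^ (2 * m)) ^ ((2 * (m : ℝ) + 1) / (2 * m)))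
      = (1 + (x - 1) ^ (2 * m)) ^ e / 2 := by
    rw [he, neg_div, Real.rpow_neg (base_pos m (x - 1)).le]
    field_simp
  rw [Phi, hrhs]
  rw [hslope] at hlt
  linarith
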